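/- arXiv:2111.14430 — 2 statements merged into one kernel-verified Lean document; each statement's English description precedes it below -/
import Mathlib

section
/- Let y ∈ ℝ₊^{2m+1} with Σ_{i=0}^{2m} y_i > 0 and let Y ∈ 𝒴 have strictly positive entries on the support {(i,j) : j ≤ i ≤ j+m}. Define x⋆_j = Ŷ_j/(2√(Σ_{i=0}^{2m} y_i)) for j = 0,…,m and W⋆ = W(x⋆). Then for every strictly positive x ∈ ℝ₊^{m+1} the Pythagorean identity I(Y‖W(x)) = I(Y‖W⋆) + I(W⋆‖W(x)) holds; in particular W⋆ minimizes W ↦ I(Y‖W) over 𝒲 = {W(x) : x ∈ ℝ₊^{m+1}}. -/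
open Finset Filter

/-- Extension of `x : Fin (m+1) → ℝ` to `ℕ`, zero outside `[0, m]`. -/
def ext (m : ℕ) (x : Fin (m + 1) → ℝ) (k : ℕ) : ℝ :=
  if h : k < m + 1 then x ⟨k, h⟩ else 0

/-- Autoconvolution `(x*x)_i = ∑_{j=0}^{i} x_{i-j} x_j`. -/
def aconv (m : ℕ) (x : Fin (m + 1) → ℝ) : Fin (2 * m + 1) → ℝ :=
  fun i => ∑ j ∈ Finset.range (i.1 + 1), ext m x (i.1 - j) * ext m x j

/-- The index `ℓ + j ∈ {0,…,2m}` for `ℓ, j ∈ {0,…,m}`. -/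
def idx (m : ℕ) (ℓ j : Fin (m + 1)) : Fin (2 * m + 1) :=
  ⟨ℓ.1 + j.1, by have h1 := ℓ.isLt; have h2 := j.isLt; omega⟩

/-- One term of the I-divergence, with values in `[0,∞]`, with the conventions
`0·log(0/b) = 0` and value `∞` if `a > 0 = b`. -/
noncomputable def termDiv (a b : ℝ) : ENNReal :=
  if a = 0 then ENNReal.ofReal b
  else if b = 0 then ⊤
  else ENNReal.ofReal (a * Real.log (a / b) - a + b)

/-- `[0,∞]`-valued I-divergence between vectors. -/
noncomputable def Idiv {n : ℕ} (u v : Fin n → ℝ) : ENNReal :=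
  ∑ i, termDiv (u i) (v i)

/-- Real-valued I-divergence between vectors (used when the second argument is
positive wherever the first one is). -/
noncomputable def IdivR {n : ℕ} (u v : Fin n → ℝ) : ℝ :=
  ∑ i, (u i * Real.log (u i / v i) - u i + v i)

/-- `[0,∞]`-valued I-divergence between `(2m+1) × (m+1)` matrices. -/
noncomputable def IdivM (m : ℕ) (M N : Fin (2 * m + 1) → Fin (m + 1) → ℝ) : ENNReal :=
  ∑ i, ∑ j, termDiv (M i j) (N i j)

/-- Real-valued I-divergence between `(2m+1) × (m+1)` matrices. -/
noncomputable def IdivMR (m : ℕ) (M N : Fin (2 * m + 1) → Fin (m + 1) → ℝ) : ℝ :=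
  ∑ i, ∑ j, (M i j * Real.log (M i j / N i j) - M i j + N i j)

/-- The set 𝒴: nonnegative matrices supported on `{(i,j) : j ≤ i ≤ j+m}` with row sums `y`. -/
def calY (m : ℕ) (y : Fin (2 * m + 1) → ℝ) (Y : Fin (2 * m + 1) → Fin (m + 1) → ℝ) : Prop :=
  (∀ i j, 0 ≤ Y i j) ∧
  (∀ (i : Fin (2 * m + 1)) (j : Fin (m + 1)), ¬(j.1 ≤ i.1 ∧ i.1 ≤ j.1 + m) → Y i j = 0) ∧
  (∀ i, ∑ j, Y i j = y i)

/-- The matrix `W(x)` with `W(x)_{ij} = x_{i-j} x_j` on the support and `0` elsewhere. -/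
def Wmat (m : ℕ) (x : Fin (m + 1) → ℝ) (i : Fin (2 * m + 1)) (j : Fin (m + 1)) : ℝ :=
  if h : j.1 ≤ i.1 ∧ i.1 ≤ j.1 + m then x ⟨i.1 - j.1, by omega⟩ * x j else 0

/-- The matrix `Y*(x)` with `Y*(x)_{ij} = (x_{i-j} x_j/(x*x)_i)·y_i` on the support. -/
noncomputable def Ystar (m : ℕ) (y : Fin (2 * m + 1) → ℝ) (x : Fin (m + 1) → ℝ)
    (i : Fin (2 * m + 1)) (j : Fin (m + 1)) : ℝ :=
  if h : j.1 ≤ i.1 ∧ i.1 ≤ j.1 + m then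
    x ⟨i.1 - j.1, by omega⟩ * x j / aconv m x i * y i
  else 0

/-- `Ŷ_j = ∑_{i=0}^{m} Y_{i+j,i} + ∑_{i=j}^{j+m} Y_{ij}`. -/
def Yhat (m : ℕ) (Y : Fin (2 * m + 1) → Fin (m + 1) → ℝ) (j : Fin (m + 1)) : ℝ :=
  (∑ ℓ : Fin (m + 1), Y (idx m ℓ j) ℓ) + ∑ ℓ : Fin (m + 1), Y (idx m ℓ j) j

/-- The algorithm map `T(x)_j = x_j (1/c) ∑_ℓ x_ℓ y_{ℓ+j}/(x*x)_{ℓ+j}`,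
with `c = √(∑ y_i)`. -/
noncomputable def Tmap (m : ℕ) (y : Fin (2 * m + 1) → ℝ) (x : Fin (m + 1) → ℝ)
    (j : Fin (m + 1)) : ℝ :=
  x j * (1 / Real.sqrt (∑ i, y i)) * ∑ ℓ, x ℓ * y (idx m ℓ j) / aconv m x (idx m ℓ j)

/-- The gradient `∇_j I(x) = 2 ∑_ℓ ( x_ℓ − x_ℓ y_{ℓ+j}/(x*x)_{ℓ+j} )`. -/
noncomputable def gradI (m : ℕ) (y : Fin (2 * m + 1) → ℝ) (x : Fin (m + 1) → ℝ)
    (j : Fin (m + 1)) : ℝ :=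
  2 * ∑ ℓ, (x ℓ - x ℓ * y (idx m ℓ j) / aconv m x (idx m ℓ j))

-- AUX
lemma idx_comm (m : ℕ) (a b : Fin (m+1)) : idx m a b = idx m b a := by
  simp [idx, Nat.add_comm]

lemma idx_val (m : ℕ) (ℓ j : Fin (m+1)) : (idx m ℓ j).1 = ℓ.1 + j.1 := rfl

lemma Wmat_zero (m : ℕ) (x : Fin (m+1) → ℝ) (i : Fin (2*m+1)) (j : Fin (m+1))
    (h : ¬(j.1 ≤ i.1 ∧ i.1 ≤ j.1 + m)) : Wmat m x i j = 0 := by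
  simp only [Wmat]; rw [dif_neg h]

lemma Wmat_idx (m : ℕ) (x : Fin (m+1) → ℝ) (ℓ j : Fin (m+1)) :
    Wmat m x (idx m ℓ j) j = x ℓ * x j := by
  have h : j.1 ≤ (idx m ℓ j).1 ∧ (idx m ℓ j).1 ≤ j.1 + m := by
    simp [idx]; omega
  rw [Wmat, dif_pos h]
  congr 2
  exact Fin.ext (by simp [idx])

lemma col_sum (m : ℕ) (F : Fin (2*m+1) → Fin (m+1) → ℝ)
    (h0 : ∀ i j, ¬(j.1 ≤ i.1 ∧ i.1 ≤ j.1 + m) → F i j = 0) (j : Fin (m+1)) :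
    ∑ i, F i j = ∑ ℓ : Fin (m+1), F (idx m ℓ j) j := by
  classical
  rw [← Finset.sum_filter_of_ne (p := fun i : Fin (2*m+1) => j.1 ≤ i.1 ∧ i.1 ≤ j.1 + m)
      (fun i _ hne => by by_contra hc; exact hne (h0 i j hc))]
  refine Finset.sum_nbij' (i := fun i : Fin (2*m+1) => (⟨min (i.1 - j.1) m, by omega⟩ : Fin (m+1)))
    (j := fun ℓ : Fin (m+1) => idx m ℓ j) ?_ ?_ ?_ ?_ ?_
  · intro a _; exact Finset.mem_univ _
  · intro ℓ _
    simp only [Finset.mem_filter, Finset.mem_univ, true_and, idx]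
    omega
  · intro a ha
    simp only [Finset.mem_filter, Finset.mem_univ, true_and] at ha
    exact Fin.ext (by simp [idx]; omega)
  · intro ℓ _
    exact Fin.ext (by simp [idx]; omega)
  · intro a ha
    simp only [Finset.mem_filter, Finset.mem_univ, true_and] at ha
    congr 1
    exact Fin.ext (by simp [idx]; omega)

lemma sum_support (m : ℕ) (F : Fin (2*m+1) → Fin (m+1) → ℝ)
    (h0 : ∀ i j, ¬(j.1 ≤ i.1 ∧ i.1 ≤ j.1 + m) → F i j = 0) :
    ∑ i, ∑ j, F i j = ∑ j : Fin (m+1), ∑ ℓ : Fin (m+1), F (idx m ℓ j) j := by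
  rw [Finset.sum_comm]
  exact Finset.sum_congr rfl fun j _ => col_sum m F h0 j

lemma key_sum (m : ℕ) (M : Fin (2*m+1) → Fin (m+1) → ℝ)
    (h0 : ∀ i j, ¬(j.1 ≤ i.1 ∧ i.1 ≤ j.1 + m) → M i j = 0)
    (L : Fin (2*m+1) → Fin (m+1) → ℝ) (g : Fin (m+1) → ℝ)
    (hL : ∀ ℓ j : Fin (m+1), L (idx m ℓ j) j = g ℓ + g j) :
    ∑ i, ∑ j, M i j * L i j = ∑ j, Yhat m M j * g j := by
  rw [sum_support m (fun i j => M i j * L i j) (fun i j h => by rw [h0 i j h, zero_mul])]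
  have e1 : ∀ j : Fin (m+1), ∑ ℓ : Fin (m+1), M (idx m ℓ j) j * L (idx m ℓ j) j
      = (∑ ℓ : Fin (m+1), M (idx m ℓ j) j * g ℓ) + (∑ ℓ : Fin (m+1), M (idx m ℓ j) j) * g j := by
    intro j
    rw [Finset.sum_mul, ← Finset.sum_add_distrib]
    exact Finset.sum_congr rfl fun ℓ _ => by rw [hL ℓ j]; ring
  calc ∑ j : Fin (m+1), ∑ ℓ : Fin (m+1), M (idx m ℓ j) j * L (idx m ℓ j) j
      = ∑ j : Fin (m+1), ((∑ ℓ : Fin (m+1), M (idx m ℓ j) j * g ℓ)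
          + (∑ ℓ : Fin (m+1), M (idx m ℓ j) j) * g j) :=
        Finset.sum_congr rfl fun j _ => e1 j
    _ = (∑ j : Fin (m+1), ∑ ℓ : Fin (m+1), M (idx m ℓ j) j * g ℓ)
          + ∑ j : Fin (m+1), (∑ ℓ : Fin (m+1), M (idx m ℓ j) j) * g j := Finset.sum_add_distrib
    _ = (∑ j : Fin (m+1), (∑ ℓ : Fin (m+1), M (idx m ℓ j) ℓ) * g j)
          + ∑ j : Fin (m+1), (∑ ℓ : Fin (m+1), M (idx m ℓ j) j) * g j := by
        congr 1
        rw [Finset.sum_comm]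
        refine Finset.sum_congr rfl fun a _ => ?_
        rw [Finset.sum_mul]
        refine Finset.sum_congr rfl fun b _ => ?_
        rw [idx_comm]
    _ = ∑ j, Yhat m M j * g j := by
        rw [← Finset.sum_add_distrib]
        refine Finset.sum_congr rfl fun j _ => ?_
        rw [Yhat, add_mul]

lemma termDiv_eq (a b : ℝ) (h : a = 0 ∨ 0 < b) :
    termDiv a b = ENNReal.ofReal (a * Real.log (a / b) - a + b) := by
  rcases h with h | h
  · subst h; simp [termDiv]
  · by_cases ha : a = 0
    · subst ha; simp [termDiv]
    · simp [termDiv, ha, h.ne']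

lemma term_nonneg (a b : ℝ) (ha : 0 ≤ a) (hb : 0 ≤ b) (h : a = 0 ∨ 0 < b) :
    0 ≤ a * Real.log (a / b) - a + b := by
  rcases eq_or_lt_of_le ha with h0 | ha'
  · simp [← h0, hb]
  · rcases h with h | hbp
    · exact absurd h ha'.ne'
    · have h1 : Real.log (b / a) ≤ b / a - 1 := Real.log_le_sub_one_of_pos (by positivity)
      have h2 : Real.log (a / b) = - Real.log (b / a) := by
        rw [← Real.log_inv]; congr 1; field_simp
      have h3 : a * Real.log (b / a) ≤ b - a := by
        have h5 := mul_le_mul_of_nonneg_left h1 ha'.le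
        have h4 : a * (b / a - 1) = b - a := by field_simp
        linarith
      rw [h2, mul_neg]; linarith

lemma ptwise (A B C : ℝ) (hA : 0 < A) (hB : 0 < B) (hC : 0 < C) :
    (A * Real.log (A/C) - A + C) - (A * Real.log (A/B) - A + B) - (B * Real.log (B/C) - B + C)
      = (A - B) * Real.log (B / C) := by
  rw [Real.log_div hA.ne' hC.ne', Real.log_div hA.ne' hB.ne', Real.log_div hB.ne' hC.ne']
  ring

lemma IdivM_eq (m : ℕ) (M N : Fin (2*m+1) → Fin (m+1) → ℝ)
    (h : ∀ i j, M i j = 0 ∨ 0 < N i j) (hM : ∀ i j, 0 ≤ M i j) (hN : ∀ i j, 0 ≤ N i j) :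
    IdivM m M N = ENNReal.ofReal (IdivMR m M N) := by
  unfold IdivM IdivMR
  rw [ENNReal.ofReal_sum_of_nonneg
    (fun i _ => Finset.sum_nonneg fun j _ => term_nonneg _ _ (hM i j) (hN i j) (h i j))]
  refine Finset.sum_congr rfl fun i _ => ?_
  rw [ENNReal.ofReal_sum_of_nonneg (fun j _ => term_nonneg _ _ (hM i j) (hN i j) (h i j))]
  exact Finset.sum_congr rfl fun j _ => termDiv_eq _ _ (h i j)

lemma IdivMR_nonneg (m : ℕ) (M N : Fin (2*m+1) → Fin (m+1) → ℝ)
    (h : ∀ i j, M i j = 0 ∨ 0 < N i j) (hM : ∀ i j, 0 ≤ M i j) (hN : ∀ i j, 0 ≤ N i j) :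
    0 ≤ IdivMR m M N :=
  Finset.sum_nonneg fun i _ => Finset.sum_nonneg fun j _ =>
    term_nonneg _ _ (hM i j) (hN i j) (h i j)

/-- Pythagorean identity for the partial minimization over 𝒲, and
the minimizing property of `W⋆ = W(x⋆)` with `x⋆_j = Ŷ_j/(2√(∑ y_i))`. -/
theorem stmt6 (m : ℕ) (y : Fin (2 * m + 1) → ℝ) (hy : ∀ i, 0 ≤ y i)
    (hsum : 0 < ∑ i, y i)
    (Y : Fin (2 * m + 1) → Fin (m + 1) → ℝ) (hY : calY m y Y)
    (hYpos : ∀ (i : Fin (2 * m + 1)) (j : Fin (m + 1)),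
      j.1 ≤ i.1 ∧ i.1 ≤ j.1 + m → 0 < Y i j) :
    (∀ x : Fin (m + 1) → ℝ, (∀ j, 0 < x j) →
      IdivM m Y (Wmat m x) =
        IdivM m Y (Wmat m (fun j => Yhat m Y j / (2 * Real.sqrt (∑ i, y i)))) +
          IdivM m (Wmat m (fun j => Yhat m Y j / (2 * Real.sqrt (∑ i, y i)))) (Wmat m x)) ∧
    (∀ x : Fin (m + 1) → ℝ, (∀ j, 0 ≤ x j) →
      IdivM m Y (Wmat m (fun j => Yhat m Y j / (2 * Real.sqrt (∑ i, y i)))) ≤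
        IdivM m Y (Wmat m x)) := by
  obtain ⟨hYnn, hYsupp, hYrow⟩ := hY
  have hc : 0 < Real.sqrt (∑ i, y i) := Real.sqrt_pos.mpr hsum
  set c := Real.sqrt (∑ i, y i) with hcdef
  set xs : Fin (m + 1) → ℝ := fun j => Yhat m Y j / (2 * c) with hxsdef
  -- positivity of Yhat and xs
  have hYhatpos : ∀ j, 0 < Yhat m Y j := by
    intro j
    apply add_pos
    · refine Finset.sum_pos (fun ℓ _ => hYpos _ _ ⟨?_, ?_⟩) Finset.univ_nonempty
      · rw [idx_val]; omega
      · rw [idx_val]; have := j.isLt; omega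
    · refine Finset.sum_pos (fun ℓ _ => hYpos _ _ ⟨?_, ?_⟩) Finset.univ_nonempty
      · rw [idx_val]; omega
      · rw [idx_val]; have := ℓ.isLt; omega
  have hxspos : ∀ j, 0 < xs j := fun j => div_pos (hYhatpos j) (by positivity)
  -- sum identities
  have hSS := sum_support m Y hYsupp
  have hrowsum : ∑ i, ∑ j, Y i j = ∑ i, y i := Finset.sum_congr rfl fun i _ => hYrow i
  have hA : ∑ j : Fin (m+1), ∑ ℓ : Fin (m+1), Y (idx m ℓ j) ℓ = ∑ i, y i := by
    calc ∑ j : Fin (m+1), ∑ ℓ : Fin (m+1), Y (idx m ℓ j) ℓ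
        = ∑ j : Fin (m+1), ∑ ℓ : Fin (m+1), Y (idx m j ℓ) ℓ :=
          Finset.sum_congr rfl fun j _ => Finset.sum_congr rfl fun ℓ _ => by rw [idx_comm]
      _ = ∑ ℓ : Fin (m+1), ∑ j : Fin (m+1), Y (idx m j ℓ) ℓ := Finset.sum_comm
      _ = ∑ i, y i := by rw [← hSS, hrowsum]
  have hYhatsum : ∑ j, Yhat m Y j = 2 * (∑ i, y i) := by
    unfold Yhat
    rw [Finset.sum_add_distrib, hA, ← hSS, hrowsum]; ring
  have hcs : c * c = ∑ i, y i := Real.mul_self_sqrt hsum.le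
  have hxssum : ∑ j, xs j = c := by
    simp only [hxsdef]
    rw [← Finset.sum_div, hYhatsum]
    rw [← hcs]; field_simp
  have hxs_mul : ∀ j, 2 * c * xs j = Yhat m Y j := fun j => by
    simp only [hxsdef]; field_simp
  -- Yhat of Wstar equals Yhat of Y
  have hWhat : ∀ j, Yhat m (Wmat m xs) j = Yhat m Y j := by
    intro j
    show (∑ ℓ : Fin (m+1), Wmat m xs (idx m ℓ j) ℓ)
        + (∑ ℓ : Fin (m+1), Wmat m xs (idx m ℓ j) j) = Yhat m Y j
    have e1 : ∀ ℓ : Fin (m+1), Wmat m xs (idx m ℓ j) ℓ = xs j * xs ℓ := fun ℓ => by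
      rw [idx_comm, Wmat_idx]
    have e2 : ∀ ℓ : Fin (m+1), Wmat m xs (idx m ℓ j) j = xs ℓ * xs j := fun ℓ => Wmat_idx m xs ℓ j
    rw [Finset.sum_congr rfl fun ℓ _ => e1 ℓ, Finset.sum_congr rfl fun ℓ _ => e2 ℓ]
    rw [← Finset.mul_sum, ← Finset.sum_mul, hxssum, ← hxs_mul j]
    ring
  -- generic Wmat facts
  have hWnn : ∀ (x : Fin (m+1) → ℝ), (∀ j, 0 ≤ x j) → ∀ i j, 0 ≤ Wmat m x i j := by
    intro x hx i j
    unfold Wmat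
    split
    · exact mul_nonneg (hx _) (hx _)
    · exact le_refl _
  have hWpos : ∀ (x : Fin (m+1) → ℝ), (∀ j, 0 < x j) → ∀ i j,
      (j.1 ≤ i.1 ∧ i.1 ≤ j.1 + m) → 0 < Wmat m x i j := by
    intro x hx i j h
    unfold Wmat
    rw [dif_pos h]
    exact mul_pos (hx _) (hx _)
  -- main Pythagorean identity
  have main : ∀ x : Fin (m + 1) → ℝ, (∀ j, 0 < x j) →
      IdivM m Y (Wmat m x) = IdivM m Y (Wmat m xs) + IdivM m (Wmat m xs) (Wmat m x) := by
    intro x hx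
    have cond1 : ∀ i j, Y i j = 0 ∨ 0 < Wmat m x i j := by
      intro i j
      by_cases h : j.1 ≤ i.1 ∧ i.1 ≤ j.1 + m
      · exact Or.inr (hWpos x hx i j h)
      · exact Or.inl (hYsupp i j h)
    have cond2 : ∀ i j, Y i j = 0 ∨ 0 < Wmat m xs i j := by
      intro i j
      by_cases h : j.1 ≤ i.1 ∧ i.1 ≤ j.1 + m
      · exact Or.inr (hWpos xs hxspos i j h)
      · exact Or.inl (hYsupp i j h)
    have cond3 : ∀ i j, Wmat m xs i j = 0 ∨ 0 < Wmat m x i j := by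
      intro i j
      by_cases h : j.1 ≤ i.1 ∧ i.1 ≤ j.1 + m
      · exact Or.inr (hWpos x hx i j h)
      · exact Or.inl (Wmat_zero m xs i j h)
    have hxnn : ∀ j, 0 ≤ x j := fun j => (hx j).le
    have hxsnn : ∀ j, 0 ≤ xs j := fun j => (hxspos j).le
    rw [IdivM_eq m Y (Wmat m x) cond1 hYnn (hWnn x hxnn),
        IdivM_eq m Y (Wmat m xs) cond2 hYnn (hWnn xs hxsnn),
        IdivM_eq m (Wmat m xs) (Wmat m x) cond3 (hWnn xs hxsnn) (hWnn x hxnn),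
        ← ENNReal.ofReal_add (IdivMR_nonneg m Y (Wmat m xs) cond2 hYnn (hWnn xs hxsnn))
          (IdivMR_nonneg m (Wmat m xs) (Wmat m x) cond3 (hWnn xs hxsnn) (hWnn x hxnn))]
    congr 1
    -- the real Pythagorean identity
    have hdiff : IdivMR m Y (Wmat m x) - IdivMR m Y (Wmat m xs) - IdivMR m (Wmat m xs) (Wmat m x)
        = ∑ i, ∑ j, (Y i j - Wmat m xs i j) * Real.log (Wmat m xs i j / Wmat m x i j) := by
      unfold IdivMR
      rw [← Finset.sum_sub_distrib, ← Finset.sum_sub_distrib]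
      refine Finset.sum_congr rfl fun i _ => ?_
      rw [← Finset.sum_sub_distrib, ← Finset.sum_sub_distrib]
      refine Finset.sum_congr rfl fun j _ => ?_
      by_cases h : j.1 ≤ i.1 ∧ i.1 ≤ j.1 + m
      · exact ptwise _ _ _ (hYpos i j h) (hWpos xs hxspos i j h) (hWpos x hx i j h)
      · rw [hYsupp i j h, Wmat_zero m xs i j h, Wmat_zero m x i j h]
        simp
    have hkey : ∑ i, ∑ j, (Y i j - Wmat m xs i j) * Real.log (Wmat m xs i j / Wmat m x i j)
        = ∑ j, Yhat m (fun i j => Y i j - Wmat m xs i j) j * Real.log (xs j / x j) := by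
      refine key_sum m (fun i j => Y i j - Wmat m xs i j) ?_
        (fun i j => Real.log (Wmat m xs i j / Wmat m x i j)) (fun k => Real.log (xs k / x k)) ?_
      · intro i j h
        rw [hYsupp i j h, Wmat_zero m xs i j h, sub_zero]
      · intro ℓ j
        rw [Wmat_idx, Wmat_idx, ← div_mul_div_comm,
          Real.log_mul (div_pos (hxspos ℓ) (hx ℓ)).ne' (div_pos (hxspos j) (hx j)).ne']
    have hYhatdiff : ∀ j : Fin (m+1), Yhat m (fun i j => Y i j - Wmat m xs i j) j = 0 := by
      intro j
      have hw := hWhat j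
      unfold Yhat at hw ⊢
      simp only [Finset.sum_sub_distrib]
      linarith
    have hz : IdivMR m Y (Wmat m x) - IdivMR m Y (Wmat m xs)
        - IdivMR m (Wmat m xs) (Wmat m x) = 0 := by
      rw [hdiff, hkey]
      simp [hYhatdiff]
    linarith
  refine ⟨main, fun x hx => ?_⟩
  by_cases hpos : ∀ j, 0 < x j
  · rw [main x hpos]
    exact le_self_add
  · push_neg at hpos
    obtain ⟨j, hj⟩ := hpos
    have hxj : x j = 0 := le_antisymm hj (hx j)
    have hij : (j.1 : ℕ) < 2 * m + 1 := by have := j.isLt; omega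
    have hsupp : j.1 ≤ (⟨j.1, hij⟩ : Fin (2*m+1)).1 ∧ (⟨j.1, hij⟩ : Fin (2*m+1)).1 ≤ j.1 + m :=
      ⟨le_refl _, Nat.le_add_right _ _⟩
    have hW : Wmat m x ⟨j.1, hij⟩ j = 0 := by
      unfold Wmat
      rw [dif_pos hsupp, hxj, mul_zero]
    have hterm : termDiv (Y ⟨j.1, hij⟩ j) (Wmat m x ⟨j.1, hij⟩ j) = ⊤ := by
      rw [hW, termDiv, if_neg (hYpos _ _ hsupp).ne', if_pos rfl]
    have htop : IdivM m Y (Wmat m x) = ⊤ := by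
      rw [IdivM, ENNReal.sum_eq_top]
      exact ⟨⟨j.1, hij⟩, Finset.mem_univ _,
        by rw [ENNReal.sum_eq_top]; exact ⟨j, Finset.mem_univ _, hterm⟩⟩
    rw [htop]
    exact le_top
end

section
/- For every y ∈ ℝ₊^{2m+1}, the minimum of the original problem equals the minimum of the lifted double minimization: min over x ∈ ℝ₊^{m+1} of I(y‖x*x) equals the infimum over Y ∈ 𝒴 and x ∈ ℝ₊^{m+1} of I(Y‖W(x)) (both values taken in [0,∞], the first minimum being attained). -/
open Finset Filter

section S8Aux

open Real

lemma ext_nonneg (m : ℕ) {x : Fin (m+1) → ℝ} (hx : ∀ j, 0 ≤ x j) (k : ℕ) :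
    0 ≤ _root_.ext m x k := by
  unfold _root_.ext; split
  · exact hx _
  · exact le_rfl

lemma aconv_nonneg (m : ℕ) {x : Fin (m+1) → ℝ} (hx : ∀ j, 0 ≤ x j) (i : Fin (2*m+1)) :
    0 ≤ aconv m x i :=
  Finset.sum_nonneg fun j _ => mul_nonneg (ext_nonneg m hx _) (ext_nonneg m hx _)

lemma Wmat_nonneg (m : ℕ) {x : Fin (m+1) → ℝ} (hx : ∀ j, 0 ≤ x j) (i : Fin (2*m+1))
    (j : Fin (m+1)) : 0 ≤ Wmat m x i j := by
  unfold Wmat; split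
  · exact mul_nonneg (hx _) (hx _)
  · exact le_rfl

lemma sum_Wmat (m : ℕ) (x : Fin (m+1) → ℝ) (i : Fin (2*m+1)) :
    ∑ j, Wmat m x i j = aconv m x i := by
  have hi := i.isLt
  set F : ℕ → ℝ := fun j => if j ≤ i.1 ∧ i.1 ≤ j + m then ext m x (i.1 - j) * ext m x j else 0
    with hF
  have h1 : ∑ j, Wmat m x i j = ∑ j ∈ Finset.range (m+1), F j := by
    rw [← Fin.sum_univ_eq_sum_range]
    refine Finset.sum_congr rfl fun j _ => ?_
    by_cases h : j.1 ≤ i.1 ∧ i.1 ≤ j.1 + m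
    · have hlt : i.1 - j.1 < m + 1 := by omega
      rw [hF]; simp only [Wmat, dif_pos h, if_pos h, _root_.ext, dif_pos hlt, dif_pos j.isLt]
    · rw [hF]; simp only [Wmat, dif_neg h, if_neg h]
  have hzero : ∀ j, m + 1 ≤ j → F j = 0 := by
    intro j hj
    rw [hF]; simp only
    split
    · have hn : ¬ (j < m + 1) := by omega
      simp only [_root_.ext, dif_neg hn, mul_zero]
    · rfl
  have h2 : ∑ j ∈ Finset.range (m+1), F j = ∑ j ∈ Finset.range (2*m+1), F j := by
    refine Finset.sum_subset (Finset.range_subset_range.2 (by omega)) fun j hj hj' => ?_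
    exact hzero j (by simpa using hj')
  have h3 : aconv m x i = ∑ j ∈ Finset.range (i.1+1), F j := by
    rw [aconv]
    refine Finset.sum_congr rfl fun j hj => ?_
    have hj' : j ≤ i.1 := by simpa [Nat.lt_succ_iff] using hj
    by_cases h : i.1 ≤ j + m
    · rw [hF]; simp only [if_pos (And.intro hj' h)]
    · have hcond : ¬ (j ≤ i.1 ∧ i.1 ≤ j + m) := fun hc => h hc.2
      have hn : ¬ (i.1 - j < m + 1) := by omega
      rw [hF]; simp only [if_neg hcond, _root_.ext, dif_neg hn, zero_mul]
  have h4 : ∑ j ∈ Finset.range (i.1+1), F j = ∑ j ∈ Finset.range (2*m+1), F j := by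
    refine Finset.sum_subset (Finset.range_subset_range.2 (by omega)) fun j hj hj' => ?_
    have : i.1 + 1 ≤ j := by simpa using hj'
    rw [hF]; exact if_neg (by omega)
  rw [h1, h2, h3, h4]


lemma gfun_nonneg {a b : ℝ} (ha : 0 ≤ a) (hb : 0 ≤ b) (hab : b = 0 → a = 0) :
    0 ≤ a * Real.log (a / b) - a + b := by
  rcases eq_or_lt_of_le ha with h | h
  · simpa [← h] using hb
  · have hb' : 0 < b := lt_of_le_of_ne hb (fun h0 => h.ne' (hab h0.symm))
    have h1 : Real.log (b / a) ≤ b / a - 1 := Real.log_le_sub_one_of_pos (by positivity)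
    have h2 : Real.log (a / b) = - Real.log (b / a) := by
      rw [← Real.log_inv]; congr 1; field_simp
    have h3 : a * Real.log (b / a) ≤ a * (b / a - 1) := mul_le_mul_of_nonneg_left h1 h.le
    have h4 : a * (b / a) = b := by field_simp
    rw [h2]; nlinarith
lemma logsum_real {n : ℕ} (a b : Fin n → ℝ) (ha : ∀ j, 0 ≤ a j) (hb : ∀ j, 0 ≤ b j)
    (hab : ∀ j, b j = 0 → a j = 0) (hB : 0 < ∑ j, b j) :
    (∑ j, a j) * Real.log ((∑ j, a j) / (∑ j, b j)) ≤ ∑ j, a j * Real.log (a j / b j) := by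
  set B := ∑ j, b j with hBdef
  set A := ∑ j, a j with hAdef
  have jensen := Real.convexOn_mul_log.map_sum_le (t := Finset.univ)
      (w := fun j => b j / B) (p := fun j => a j / b j)
      (fun j _ => div_nonneg (hb j) hB.le)
      (by rw [← Finset.sum_div, ← hBdef, div_self hB.ne'])
      (fun j _ => Set.mem_Ici.2 (div_nonneg (ha j) (hb j)))
  have hsum : ∑ j, (b j / B) • (a j / b j) = A / B := by
    rw [hAdef, Finset.sum_div]
    refine Finset.sum_congr rfl fun j _ => ?_
    rcases eq_or_lt_of_le (hb j) with h0 | h0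
    · rw [smul_eq_mul, ← h0, hab j h0.symm]; simp
    · rw [smul_eq_mul]; field_simp
  have hrhs : ∑ j, (b j / B) • ((a j / b j) * Real.log (a j / b j)) =
      (∑ j, a j * Real.log (a j / b j)) / B := by
    rw [Finset.sum_div]
    refine Finset.sum_congr rfl fun j _ => ?_
    rcases eq_or_lt_of_le (hb j) with h0 | h0
    · rw [smul_eq_mul, ← h0, hab j h0.symm]; simp
    · rw [smul_eq_mul]; field_simp
  rw [hsum, hrhs] at jensen
  have := mul_le_mul_of_nonneg_left jensen hB.le
  calc A * Real.log (A / B) = B * (A / B * Real.log (A / B)) := by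
        rw [← mul_assoc, mul_div_cancel₀ _ hB.ne']
    _ ≤ B * ((∑ j, a j * Real.log (a j / b j)) / B) := this
    _ = ∑ j, a j * Real.log (a j / b j) := by rw [mul_div_cancel₀ _ hB.ne']

lemma termDiv_eq_ofReal {a b : ℝ} (hab : b = 0 → a = 0) :
    termDiv a b = ENNReal.ofReal (a * Real.log (a / b) - a + b) := by
  unfold termDiv
  by_cases h : a = 0
  · simp [h]
  · rw [if_neg h, if_neg (fun h0 => h (hab h0))]

lemma sum_termDiv_le {n : ℕ} (a b : Fin n → ℝ) (ha : ∀ j, 0 ≤ a j) (hb : ∀ j, 0 ≤ b j) :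
    termDiv (∑ j, a j) (∑ j, b j) ≤ ∑ j, termDiv (a j) (b j) := by
  by_cases hbad : ∃ j, b j = 0 ∧ a j ≠ 0
  · obtain ⟨j, hbj, haj⟩ := hbad
    have : termDiv (a j) (b j) = ⊤ := by rw [termDiv, if_neg haj, if_pos hbj]
    rw [ENNReal.sum_eq_top.2 ⟨j, Finset.mem_univ j, this⟩]
    exact le_top
  · push_neg at hbad
    have hab : ∀ j, b j = 0 → a j = 0 := fun j h => hbad j h
    have hbn : ∀ j, (0:ℝ) ≤ b j := hb
    have hrw : ∀ j, termDiv (a j) (b j)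
        = ENNReal.ofReal (a j * Real.log (a j / b j) - a j + b j) :=
      fun j => termDiv_eq_ofReal (hab j)
    have hSab : (∑ j, b j) = 0 → (∑ j, a j) = 0 := by
      intro hs
      have : ∀ j, b j = 0 := fun j =>
        le_antisymm (hs ▸ Finset.single_le_sum (fun k _ => hb k) (Finset.mem_univ j)) (hb j)
      exact Finset.sum_eq_zero fun j _ => hab j (this j)
    rw [termDiv_eq_ofReal hSab]
    calc ENNReal.ofReal ((∑ j, a j) * Real.log ((∑ j, a j) / ∑ j, b j)
            - (∑ j, a j) + ∑ j, b j)
        ≤ ENNReal.ofReal (∑ j, (a j * Real.log (a j / b j) - a j + b j)) := by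
          apply ENNReal.ofReal_le_ofReal
          rcases eq_or_lt_of_le (Finset.sum_nonneg (fun j _ => hb j) : 0 ≤ ∑ j, b j)
            with hB | hB
          · have hA := hSab hB.symm
            rw [hA, ← hB]
            simpa using Finset.sum_nonneg fun j _ => gfun_nonneg (ha j) (hb j) (hab j)
          · rw [Finset.sum_add_distrib, Finset.sum_sub_distrib]
            have := logsum_real a b ha hb hab hB
            linarith
      _ = ∑ j, ENNReal.ofReal (a j * Real.log (a j / b j) - a j + b j) := by
          rw [ENNReal.ofReal_sum_of_nonneg fun j _ => gfun_nonneg (ha j) (hb j) (hab j)]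
      _ = ∑ j, termDiv (a j) (b j) := by
          exact (Finset.sum_congr rfl fun j _ => (hrw j).symm)

lemma Idiv_le_IdivM (m : ℕ) (y : Fin (2*m+1) → ℝ) {Y : Fin (2*m+1) → Fin (m+1) → ℝ}
    (hY : calY m y Y) {x : Fin (m+1) → ℝ} (hx : ∀ j, 0 ≤ x j) :
    Idiv y (aconv m x) ≤ IdivM m Y (Wmat m x) := by
  rw [Idiv, IdivM]
  refine Finset.sum_le_sum fun i _ => ?_
  have h := sum_termDiv_le (fun j => Y i j) (fun j => Wmat m x i j)
      (fun j => hY.1 i j) (fun j => Wmat_nonneg m hx i j)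
  rwa [hY.2.2 i, sum_Wmat m x i] at h

lemma Ystar_entry (m : ℕ) (y : Fin (2*m+1) → ℝ) (x : Fin (m+1) → ℝ) (i : Fin (2*m+1))
    (j : Fin (m+1)) : Ystar m y x i j = Wmat m x i j / aconv m x i * y i := by
  unfold Ystar Wmat; split
  · rfl
  · simp

lemma Ystar_mem (m : ℕ) (y : Fin (2*m+1) → ℝ) (hy : ∀ i, 0 ≤ y i) (x : Fin (m+1) → ℝ)
    (hx : ∀ j, 0 ≤ x j) (hpos : ∀ i, y i ≠ 0 → aconv m x i ≠ 0) :
    calY m y (Ystar m y x) := by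
  refine ⟨fun i j => ?_, fun i j h => ?_, fun i => ?_⟩
  · rw [Ystar_entry]
    exact mul_nonneg (div_nonneg (Wmat_nonneg m hx i j) (aconv_nonneg m hx i)) (hy i)
  · rw [Ystar]; exact dif_neg h
  · by_cases h0 : y i = 0
    · rw [h0]
      exact Finset.sum_eq_zero fun j _ => by rw [Ystar_entry, h0, mul_zero]
    · have hz := hpos i h0
      rw [Finset.sum_congr rfl (fun j _ => Ystar_entry m y x i j), ← Finset.sum_mul,
        ← Finset.sum_div, sum_Wmat, div_self hz, one_mul]

lemma IdivM_Ystar (m : ℕ) (y : Fin (2*m+1) → ℝ) (hy : ∀ i, 0 ≤ y i) (x : Fin (m+1) → ℝ)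
    (hx : ∀ j, 0 ≤ x j) (hpos : ∀ i, y i ≠ 0 → aconv m x i ≠ 0) :
    IdivM m (Ystar m y x) (Wmat m x) = Idiv y (aconv m x) := by
  rw [IdivM, Idiv]
  refine Finset.sum_congr rfl fun i _ => ?_
  by_cases h0 : y i = 0
  · calc ∑ j, termDiv (Ystar m y x i j) (Wmat m x i j)
        = ∑ j, ENNReal.ofReal (Wmat m x i j) := Finset.sum_congr rfl fun j _ => by
            rw [Ystar_entry, h0, mul_zero, termDiv, if_pos rfl]
      _ = ENNReal.ofReal (∑ j, Wmat m x i j) :=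
          (ENNReal.ofReal_sum_of_nonneg fun j _ => Wmat_nonneg m hx i j).symm
      _ = termDiv (y i) (aconv m x i) := by rw [sum_Wmat, h0, termDiv, if_pos rfl]
  · have hz : aconv m x i ≠ 0 := hpos i h0
    have hy' : 0 < y i := (hy i).lt_of_ne (Ne.symm h0)
    set z := aconv m x i with hzdef
    have hz' : 0 < z := (aconv_nonneg m hx i).lt_of_ne (Ne.symm hz)
    have hS : ∑ j, Wmat m x i j = z := sum_Wmat m x i
    have key : ∀ j, termDiv (Ystar m y x i j) (Wmat m x i j) =
        ENNReal.ofReal (Wmat m x i j / z * y i * Real.log (y i / z)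
          - Wmat m x i j / z * y i + Wmat m x i j) := by
      intro j
      rcases eq_or_lt_of_le (Wmat_nonneg m hx i j) with hW | hW
      · rw [Ystar_entry, ← hzdef, ← hW]
        simp [termDiv]
      · have hapos : 0 < Wmat m x i j / z * y i :=
          mul_pos (div_pos hW hz') hy'
        rw [Ystar_entry, ← hzdef, termDiv, if_neg hapos.ne', if_neg hW.ne']
        congr 2
        have h2 : (Wmat m x i j / z * y i) / Wmat m x i j = y i / z := by
          field_simp
        rw [h2]
    have hg : ∀ j, 0 ≤ Wmat m x i j / z * y i * Real.log (y i / z)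
        - Wmat m x i j / z * y i + Wmat m x i j := by
      intro j
      rcases eq_or_lt_of_le (Wmat_nonneg m hx i j) with hW | hW
      · rw [← hW]; simp
      · have h1 := gfun_nonneg (a := Wmat m x i j / z * y i) (b := Wmat m x i j)
          (mul_nonneg (div_nonneg hW.le hz'.le) (hy i)) (Wmat_nonneg m hx i j)
          (fun h => absurd h hW.ne')
        have h2 : (Wmat m x i j / z * y i) / Wmat m x i j = y i / z := by
          field_simp
        rwa [h2] at h1
    have e1 : ∑ j, (Wmat m x i j / z * y i * Real.log (y i / z))
        = y i * Real.log (y i / z) := by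
      rw [← Finset.sum_mul, ← Finset.sum_mul, ← Finset.sum_div, hS, div_self hz, one_mul]
    have e2 : ∑ j, (Wmat m x i j / z * y i) = y i := by
      rw [← Finset.sum_mul, ← Finset.sum_div, hS, div_self hz, one_mul]
    calc ∑ j, termDiv (Ystar m y x i j) (Wmat m x i j)
        = ∑ j, ENNReal.ofReal (Wmat m x i j / z * y i * Real.log (y i / z)
            - Wmat m x i j / z * y i + Wmat m x i j) :=
          Finset.sum_congr rfl fun j _ => key j
      _ = ENNReal.ofReal (∑ j, (Wmat m x i j / z * y i * Real.log (y i / z)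
            - Wmat m x i j / z * y i + Wmat m x i j)) :=
          (ENNReal.ofReal_sum_of_nonneg fun j _ => hg j).symm
      _ = ENNReal.ofReal (y i * Real.log (y i / z) - y i + z) := by
          rw [Finset.sum_add_distrib, Finset.sum_sub_distrib, e1, e2, hS]
      _ = termDiv (y i) z := (termDiv_eq_ofReal (fun h => absurd h hz)).symm

lemma continuous_ext (m k : ℕ) : Continuous fun x : Fin (m+1) → ℝ => _root_.ext m x k := by
  by_cases h : k < m + 1
  · simp only [_root_.ext, dif_pos h]
    exact continuous_apply _
  · simp only [_root_.ext, dif_neg h]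
    exact continuous_const

lemma continuous_aconv (m : ℕ) (i : Fin (2*m+1)) :
    Continuous fun x : Fin (m+1) → ℝ => aconv m x i := by
  unfold aconv
  exact continuous_finset_sum _ fun j _ => (continuous_ext m _).mul (continuous_ext m _)

lemma continuousOn_termDiv {a : ℝ} (ha0 : 0 ≤ a) :
    ContinuousOn (fun b => termDiv a b) (Set.Ici (0:ℝ)) := by
  by_cases ha : a = 0
  · subst ha
    simp only [termDiv, if_pos rfl]
    exact ENNReal.continuous_ofReal.continuousOn
  · have hap : 0 < a := lt_of_le_of_ne ha0 (Ne.symm ha)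
    intro b hb
    rcases eq_or_lt_of_le (Set.mem_Ici.1 hb) with hb0 | hb0
    · -- b = 0
      subst hb0
      have h0 : termDiv a 0 = ⊤ := by rw [termDiv, if_neg ha, if_pos rfl]
      have hsplit : (Set.Ici (0:ℝ)) = {0} ∪ Set.Ioi 0 := by
        ext c
        simp only [Set.mem_Ici, Set.mem_union, Set.mem_singleton_iff, Set.mem_Ioi]
        constructor
        · intro h
          rcases eq_or_lt_of_le h with h | h
          exacts [Or.inl h.symm, Or.inr h]
        · rintro (h | h)
          exacts [le_of_eq h.symm, h.le]
      show Tendsto (fun c => termDiv a c) (nhdsWithin 0 (Set.Ici 0)) (nhds (termDiv a 0))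
      rw [h0, hsplit, nhdsWithin_union, nhdsWithin_singleton, Filter.tendsto_sup]
      constructor
      · simpa [h0] using tendsto_pure_nhds (fun c => termDiv a c) 0
      · have h1 : Tendsto (fun c : ℝ => (-a) * Real.log c) (nhdsWithin 0 (Set.Ioi 0)) atTop :=
          Real.tendsto_log_nhdsGT_zero.const_mul_atBot_of_neg (by linarith)
        have h2 : Tendsto (fun c : ℝ => (-a) * Real.log c + (a * Real.log a - a + c))
            (nhdsWithin 0 (Set.Ioi 0)) atTop := by
          apply tendsto_atTop_add_right_of_le' _ (a * Real.log a - a) h1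
          filter_upwards [self_mem_nhdsWithin] with c hc
          have hc' : (0:ℝ) < c := hc
          linarith
        have h3 := (ENNReal.tendsto_ofReal_atTop).comp h2
        apply Filter.Tendsto.congr' ?_ h3
        filter_upwards [self_mem_nhdsWithin] with c hc
        have hc' : (0:ℝ) < c := hc
        show ENNReal.ofReal _ = termDiv a c
        rw [termDiv, if_neg ha, if_neg hc'.ne']
        congr 1
        rw [Real.log_div ha hc'.ne']
        ring
    · -- b > 0
      have hev : (fun c => termDiv a c) =ᶠ[nhds b]
          (fun c => ENNReal.ofReal (a * Real.log (a / c) - a + c)) := by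
        filter_upwards [eventually_gt_nhds hb0] with c hc
        rw [termDiv, if_neg ha, if_neg hc.ne']
      have hca : ContinuousAt (fun c => ENNReal.ofReal (a * Real.log (a / c) - a + c)) b := by
        apply ENNReal.continuous_ofReal.continuousAt.comp
        apply ContinuousAt.add (ContinuousAt.sub ?_ continuousAt_const) continuousAt_id
        apply continuousAt_const.mul
        exact (Real.continuousAt_log (div_ne_zero ha hb0.ne')).comp
          (continuousAt_const.div continuousAt_id hb0.ne')
      exact (hca.congr hev.symm).continuousWithinAt

lemma contOn_f (m : ℕ) (y : Fin (2*m+1) → ℝ) (hy : ∀ i, 0 ≤ y i) :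
    ContinuousOn (fun x => Idiv y (aconv m x)) {x : Fin (m+1) → ℝ | ∀ j, 0 ≤ x j} := by
  unfold Idiv
  apply continuousOn_finset_sum
  intro i _
  exact (continuousOn_termDiv (hy i)).comp (continuous_aconv m i).continuousOn
    (fun x hx => Set.mem_Ici.2 (aconv_nonneg m hx i))

lemma termDiv_coercive {a b : ℝ} (ha : 0 ≤ a) (hb : 0 ≤ b) :
    ENNReal.ofReal (b - 2*a*Real.sqrt b - (a + |a * Real.log a|)) ≤ termDiv a b := by
  rcases eq_or_lt_of_le ha with h | h
  · rw [termDiv, if_pos h.symm]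
    apply ENNReal.ofReal_le_ofReal
    rw [← h]
    simp [Real.sqrt_nonneg]
  · rcases eq_or_lt_of_le hb with h0 | h0
    · rw [termDiv, if_neg h.ne', if_pos h0.symm]; exact le_top
    · rw [termDiv, if_neg h.ne', if_neg h0.ne']
      apply ENNReal.ofReal_le_ofReal
      have hs : 0 < Real.sqrt b := Real.sqrt_pos.2 h0
      have hl1 : Real.log (Real.sqrt b) ≤ Real.sqrt b - 1 := Real.log_le_sub_one_of_pos hs
      have hl2 : Real.log b = 2 * Real.log (Real.sqrt b) := by
        rw [← Real.sq_sqrt h0.le, Real.log_pow]; norm_num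
      have hlog : Real.log b ≤ 2 * Real.sqrt b := by rw [hl2]; linarith
      have hmul : a * Real.log b ≤ 2*a*Real.sqrt b := by nlinarith
      have habs : -|a * Real.log a| ≤ a * Real.log a := neg_abs_le _
      rw [Real.log_div h.ne' h0.ne', mul_sub]
      linarith

lemma termDiv_ne_top {a b : ℝ} (hb : b ≠ 0) : termDiv a b ≠ ⊤ := by
  by_cases h1 : a = 0
  · rw [termDiv, if_pos h1]; exact ENNReal.ofReal_ne_top
  · rw [termDiv, if_neg h1, if_neg hb]; exact ENNReal.ofReal_ne_top

lemma one_le_aconv_one (m : ℕ) (i : Fin (2*m+1)) :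
    (1:ℝ) ≤ aconv m (fun _ => 1) i := by
  rw [← sum_Wmat]
  have hi := i.isLt
  have hcond : (i.1 - m) ≤ i.1 ∧ i.1 ≤ (i.1 - m) + m := by omega
  calc (1:ℝ) = Wmat m (fun _ => 1) i ⟨i.1 - m, by omega⟩ := by
        rw [Wmat, dif_pos hcond]; norm_num
    _ ≤ ∑ j, Wmat m (fun _ => 1) i j :=
        Finset.single_le_sum (fun j _ => Wmat_nonneg m (fun _ => zero_le_one) i j)
          (Finset.mem_univ _)

lemma sq_le_aconv (m : ℕ) {x : Fin (m+1) → ℝ} (hx : ∀ j, 0 ≤ x j) (j0 : Fin (m+1)) :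
    x j0 * x j0 ≤ aconv m x ⟨2*j0.1, by have := j0.isLt; omega⟩ := by
  rw [aconv]
  have hmem : j0.1 ∈ Finset.range (2*j0.1+1) := by
    simp only [Finset.mem_range]; omega
  have hterm : x j0 * x j0 = _root_.ext m x (2*j0.1 - j0.1) * _root_.ext m x j0.1 := by
    have h2 : 2*j0.1 - j0.1 = j0.1 := by omega
    rw [h2]
    simp only [_root_.ext, dif_pos j0.isLt]
  rw [hterm]
  exact Finset.single_le_sum (f := fun j => _root_.ext m x (2*j0.1 - j) * _root_.ext m x j)
    (fun j _ => mul_nonneg (ext_nonneg m hx _) (ext_nonneg m hx _)) hmem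

end S8Aux

set_option maxHeartbeats 1000000 in
/-- the (attained) minimum of the original problem equals the
infimum of the lifted double minimization. -/
theorem stmt8 (m : ℕ) (y : Fin (2 * m + 1) → ℝ) (hy : ∀ i, 0 ≤ y i) :
    ∃ xs : Fin (m + 1) → ℝ, (∀ j, 0 ≤ xs j) ∧
      (∀ x : Fin (m + 1) → ℝ, (∀ j, 0 ≤ x j) →
        Idiv y (aconv m xs) ≤ Idiv y (aconv m x)) ∧
      Idiv y (aconv m xs) =
        ⨅ (Y : {Y : Fin (2 * m + 1) → Fin (m + 1) → ℝ // calY m y Y})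
          (x : {x : Fin (m + 1) → ℝ // ∀ j, 0 ≤ x j}),
            IdivM m Y.1 (Wmat m x.1) := by
  classical
  have hone_top : Idiv y (aconv m (fun _ => (1:ℝ))) ≠ ⊤ := by
    rw [Idiv, Ne, ENNReal.sum_eq_top]
    push_neg
    intro i _
    exact termDiv_ne_top (by have := one_le_aconv_one m i; intro h; rw [h] at this; linarith)
  set P : ℝ := ∑ i, 2 * y i with hP
  set Q : ℝ := ∑ i, (y i + |y i * Real.log (y i)|) with hQ
  set M : ℝ := (Idiv y (aconv m (fun _ => (1:ℝ)))).toReal with hM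
  have hM0 : 0 ≤ M := ENNReal.toReal_nonneg
  have hP0 : 0 ≤ P := Finset.sum_nonneg fun i _ => by have := hy i; linarith
  have hQ0 : 0 ≤ Q := Finset.sum_nonneg fun i _ => add_nonneg (hy i) (abs_nonneg _)
  set R : ℝ := 1 + P + Q + M with hR
  have hR1 : 1 ≤ R := by simp only [hR]; linarith
  set K : Set (Fin (m+1) → ℝ) := Set.Icc 0 (fun _ => R) with hK
  have hKc : IsCompact K := isCompact_Icc
  have hKne : K.Nonempty :=
    ⟨0, le_rfl, Pi.le_def.2 fun j => by simp only [Pi.zero_apply]; linarith⟩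
  have hKS : ∀ x ∈ K, ∀ j, 0 ≤ x j := by
    intro x hx j
    have h1 := Pi.le_def.1 hx.1 j
    simpa using h1
  obtain ⟨xs, hxsK, hxs_min⟩ := hKc.exists_isMinOn hKne
    ((contOn_f m y hy).mono (fun x hx => hKS x hx))
  have hxs0 : ∀ j, 0 ≤ xs j := hKS xs hxsK
  have hone_K : (fun _ => (1:ℝ)) ∈ K :=
    ⟨Pi.le_def.2 fun j => by simp, Pi.le_def.2 fun j => hR1⟩
  have hglobal : ∀ x, (∀ j, 0 ≤ x j) → Idiv y (aconv m xs) ≤ Idiv y (aconv m x) := by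
    intro x hx
    by_cases hxK : x ∈ K
    · exact isMinOn_iff.1 hxs_min _ hxK
    · have hex : ∃ j0, R < x j0 := by
        by_contra hc
        push_neg at hc
        exact hxK (Set.mem_Icc.2 ⟨Pi.le_def.2 fun j => by simpa using hx j,
          Pi.le_def.2 fun j => hc j⟩)
      obtain ⟨j0, hj0⟩ := hex
      set i0 : Fin (2*m+1) := ⟨2*j0.1, by have := j0.isLt; omega⟩ with hi0
      have hz0 : 0 ≤ aconv m x i0 := aconv_nonneg m hx i0
      set t := Real.sqrt (aconv m x i0) with ht
      have ht0 : 0 ≤ t := Real.sqrt_nonneg _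
      have hxj0 : x j0 ≤ t := by
        rw [ht, ← Real.sqrt_mul_self (hx j0)]
        exact Real.sqrt_le_sqrt (sq_le_aconv m hx j0)
      have hRt : R < t := lt_of_lt_of_le hj0 hxj0
      have h2y : 2 * y i0 ≤ P :=
        Finset.single_le_sum (f := fun i => 2 * y i)
          (fun i _ => by have := hy i; show (0:ℝ) ≤ 2 * y i; linarith) (Finset.mem_univ i0)
      have hC : y i0 + |y i0 * Real.log (y i0)| ≤ Q :=
        Finset.single_le_sum (f := fun i => y i + |y i * Real.log (y i)|)
          (fun i _ => add_nonneg (hy i) (abs_nonneg _)) (Finset.mem_univ i0)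
      have htt : t * t = aconv m x i0 := Real.mul_self_sqrt hz0
      have hMlt : M < aconv m x i0 - 2*(y i0)*t - (y i0 + |y i0 * Real.log (y i0)|) := by
        have hc0 : 0 ≤ y i0 + |y i0 * Real.log (y i0)| := add_nonneg (hy i0) (abs_nonneg _)
        have hy0 : 0 ≤ 2 * y i0 := by have := hy i0; linarith
        have h1 : (R - P) * t ≤ (t - P) * t :=
          mul_le_mul_of_nonneg_right (by linarith) ht0
        have h2 : (1 + Q + M) * 1 ≤ (1 + Q + M) * t :=
          mul_le_mul_of_nonneg_left (by linarith) (by linarith)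
        have hRP : R - P = 1 + Q + M := by rw [hR]; ring
        nlinarith [htt, mul_le_mul_of_nonneg_right h2y ht0,
          mul_le_mul_of_nonneg_right (le_refl t) ht0]
      calc Idiv y (aconv m xs) ≤ Idiv y (aconv m (fun _ => 1)) := isMinOn_iff.1 hxs_min _ hone_K
        _ = ENNReal.ofReal M := (ENNReal.ofReal_toReal hone_top).symm
        _ ≤ ENNReal.ofReal (aconv m x i0 - 2*(y i0)*Real.sqrt (aconv m x i0)
              - (y i0 + |y i0 * Real.log (y i0)|)) :=
            ENNReal.ofReal_le_ofReal (by rw [← ht]; exact hMlt.le)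
        _ ≤ termDiv (y i0) (aconv m x i0) := termDiv_coercive (hy i0) hz0
        _ ≤ Idiv y (aconv m x) := by
            rw [Idiv]
            exact Finset.single_le_sum (f := fun i => termDiv (y i) (aconv m x i))
              (fun i _ => zero_le) (Finset.mem_univ i0)
  refine ⟨xs, hxs0, hglobal, ?_⟩
  apply le_antisymm
  · exact le_iInf fun Y => le_iInf fun x =>
      (hglobal x.1 x.2).trans (Idiv_le_IdivM m y Y.2 x.2)
  · by_cases hpos : ∀ i, y i ≠ 0 → aconv m xs i ≠ 0
    · have hmem := Ystar_mem m y hy xs hxs0 hpos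
      calc (⨅ (Y : {Y : Fin (2 * m + 1) → Fin (m + 1) → ℝ // calY m y Y})
            (x : {x : Fin (m + 1) → ℝ // ∀ j, 0 ≤ x j}), IdivM m Y.1 (Wmat m x.1))
          ≤ IdivM m (Ystar m y xs) (Wmat m xs) :=
            by
            refine iInf_le_of_le ⟨Ystar m y xs, hmem⟩ ?_
            exact iInf_le_of_le ⟨xs, hxs0⟩ le_rfl
        _ = Idiv y (aconv m xs) := IdivM_Ystar m y hy xs hxs0 hpos
    · push_neg at hpos
      obtain ⟨i, hyi, hzi⟩ := hpos
      have htop : Idiv y (aconv m xs) = ⊤ := by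
        rw [Idiv, ENNReal.sum_eq_top]
        exact ⟨i, Finset.mem_univ i, by rw [hzi, termDiv, if_neg hyi, if_pos rfl]⟩
      rw [htop]
      exact le_top
end
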